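/- Let p ≥ 1 and α_1,…,α_p ∈ [0,1] with α_p > 0, and suppose the greatest common divisor of {i ∈ {1,…,p} : α_i > 0} equals 1. Then ρ(A) is a root of the characteristic polynomial φ of multiplicity one, and every complex root λ of φ with λ ≠ ρ(A) satisfies |λ| < ρ(A). -/

import Mathlib

open Polynomial Matrix

noncomputable section

/-- The companion matrix with first row `(α_1, …, α_p)` and subdiagonal entries `1`. -/
def companion (p : ℕ) (α : Fin p → ℝ) : Matrix (Fin p) (Fin p) ℝ :=
  Matrix.of fun i j => if (i : ℕ) = 0 then α j else if (i : ℕ) = (j : ℕ) + 1 then 1 else 0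

/-- `φ(λ) = λ^p − α_1 λ^{p−1} − ⋯ − α_p`, where `α i` (0-indexed) is `α_{i+1}`. -/
def phiPoly (p : ℕ) (α : Fin p → ℝ) : Polynomial ℝ :=
  X ^ p - ∑ k : Fin p, C (α k) * X ^ (p - 1 - (k : ℕ))

/-- The spectral radius of a real matrix: the maximum (supremum) of the moduli of its
complex eigenvalues. -/
def specRad {p : ℕ} (A : Matrix (Fin p) (Fin p) ℝ) : ℝ :=
  sSup {r : ℝ | ∃ z ∈ spectrum ℂ (A.map (Complex.ofReal : ℝ → ℂ)), ‖z‖ = r}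

section Aux

lemma evalPhi (p : ℕ) (α : Fin p → ℝ) (x : ℝ) :
    (phiPoly p α).eval x = x ^ p - ∑ k : Fin p, α k * x ^ (p - 1 - (k : ℕ)) := by
  simp [phiPoly, eval_finset_sum]

lemma evalPhiC (p : ℕ) (α : Fin p → ℝ) (z : ℂ) :
    ((phiPoly p α).map (algebraMap ℝ ℂ)).eval z
      = z ^ p - ∑ k : Fin p, (α k : ℂ) * z ^ (p - 1 - (k : ℕ)) := by
  simp [phiPoly, Polynomial.map_sub, Polynomial.map_pow, Polynomial.map_sum,
    eval_finset_sum]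

lemma sum_lt (p : ℕ) (hp : 0 < p) (α : Fin p → ℝ)
    (hα : ∀ i, 0 ≤ α i) (hαp : 0 < α ⟨p - 1, Nat.sub_lt hp Nat.one_pos⟩)
    {x y : ℝ} (hx : 0 < x) (hxy : x < y)
    (hroot : ∑ k : Fin p, α k * x ^ (p - 1 - (k : ℕ)) = x ^ p) :
    ∑ k : Fin p, α k * y ^ (p - 1 - (k : ℕ)) < y ^ p := by
  set c : ℝ := y / x with hc
  have hc1 : 1 < c := (one_lt_div hx).2 hxy
  have hyc : y = x * c := by rw [hc]; field_simp
  have key : ∀ k : Fin p, α k * y ^ (p - 1 - (k : ℕ))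
      ≤ (α k * x ^ (p - 1 - (k : ℕ))) * c ^ p := by
    intro k
    rw [hyc, mul_pow]
    have h1 : c ^ (p - 1 - (k : ℕ)) ≤ c ^ p :=
      pow_le_pow_right₀ hc1.le (by omega)
    have h2 : (0:ℝ) ≤ α k * x ^ (p - 1 - (k : ℕ)) :=
      mul_nonneg (hα k) (pow_nonneg hx.le _)
    calc α k * (x ^ (p - 1 - (k : ℕ)) * c ^ (p - 1 - (k : ℕ)))
        = (α k * x ^ (p - 1 - (k : ℕ))) * c ^ (p - 1 - (k : ℕ)) := by ring
      _ ≤ (α k * x ^ (p - 1 - (k : ℕ))) * c ^ p := by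
          exact mul_le_mul_of_nonneg_left h1 h2
  have keystrict : α ⟨p - 1, Nat.sub_lt hp Nat.one_pos⟩ * y ^ (p - 1 - ((p:ℕ) - 1))
      < (α ⟨p - 1, Nat.sub_lt hp Nat.one_pos⟩ * x ^ (p - 1 - ((p:ℕ) - 1))) * c ^ p := by
    have he : p - 1 - (p - 1) = 0 := by omega
    rw [he]
    simp only [pow_zero, mul_one]
    have : (1:ℝ) < c ^ p := one_lt_pow₀ hc1 (by omega)
    nlinarith [hαp]
  have hstrict : ∑ k : Fin p, α k * y ^ (p - 1 - (k : ℕ))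
      < ∑ k : Fin p, (α k * x ^ (p - 1 - (k : ℕ))) * c ^ p := by
    apply Finset.sum_lt_sum (fun k _ => key k)
    exact ⟨⟨p - 1, Nat.sub_lt hp Nat.one_pos⟩, Finset.mem_univ _, keystrict⟩
  calc ∑ k : Fin p, α k * y ^ (p - 1 - (k : ℕ))
      < ∑ k : Fin p, (α k * x ^ (p - 1 - (k : ℕ))) * c ^ p := hstrict
    _ = (∑ k : Fin p, α k * x ^ (p - 1 - (k : ℕ))) * c ^ p := by
        rw [Finset.sum_mul]
    _ = x ^ p * c ^ p := by rw [hroot]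
    _ = y ^ p := by rw [hyc, mul_pow]


lemma sum_zero_pow (p : ℕ) (hp : 0 < p) (α : Fin p → ℝ) :
    ∑ k : Fin p, α k * (0:ℝ) ^ (p - 1 - (k : ℕ)) = α ⟨p - 1, Nat.sub_lt hp Nat.one_pos⟩ := by
  rw [Finset.sum_eq_single (⟨p - 1, Nat.sub_lt hp Nat.one_pos⟩ : Fin p)]
  · simp
  · intro k _ hk
    have : 0 < p - 1 - (k : ℕ) := by
      have := k.isLt
      have hne : (k : ℕ) ≠ p - 1 := fun h => hk (by ext; simp [h])
      omega
    rw [zero_pow (by omega), mul_zero]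
  · simp

lemma F_top_pos (p : ℕ) (hp : 0 < p) (α : Fin p → ℝ)
    (hα : ∀ i, α i ∈ Set.Icc (0:ℝ) 1) :
    ∑ k : Fin p, α k * ((p:ℝ) + 1) ^ (p - 1 - (k : ℕ)) < ((p:ℝ) + 1) ^ p := by
  have hb : ∀ k : Fin p, α k * ((p:ℝ) + 1) ^ (p - 1 - (k : ℕ)) ≤ ((p:ℝ)+1) ^ (p-1) := by
    intro k
    have h1 : ((p:ℝ) + 1) ^ (p - 1 - (k : ℕ)) ≤ ((p:ℝ)+1) ^ (p-1) :=
      pow_le_pow_right₀ (by linarith [Nat.cast_nonneg (α := ℝ) p]) (by omega)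
    have h2 := (hα k).1
    have h3 := (hα k).2
    nlinarith [pow_nonneg (by positivity : (0:ℝ) ≤ (p:ℝ)+1) (p - 1 - (k:ℕ))]
  calc ∑ k : Fin p, α k * ((p:ℝ) + 1) ^ (p - 1 - (k : ℕ))
      ≤ ∑ _k : Fin p, ((p:ℝ)+1) ^ (p-1) := Finset.sum_le_sum (fun k _ => hb k)
    _ = (p:ℝ) * ((p:ℝ)+1) ^ (p-1) := by
        rw [Finset.sum_const]; simp [mul_comm]
    _ < ((p:ℝ)+1) * ((p:ℝ)+1) ^ (p-1) := by
        have : (0:ℝ) < ((p:ℝ)+1) ^ (p-1) := by positivity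
        nlinarith
    _ = ((p:ℝ)+1) ^ p := by
        rw [← pow_succ']
        congr 1
        omega

lemma exists_root (p : ℕ) (hp : 0 < p) (α : Fin p → ℝ)
    (hα : ∀ i, α i ∈ Set.Icc (0:ℝ) 1) (hαp : 0 < α ⟨p - 1, Nat.sub_lt hp Nat.one_pos⟩) :
    ∃ r : ℝ, 0 < r ∧ ∑ k : Fin p, α k * r ^ (p - 1 - (k : ℕ)) = r ^ p := by
  have hcont : ContinuousOn (fun x => (phiPoly p α).eval x) (Set.Icc 0 ((p:ℝ)+1)) :=
    (Polynomial.continuous _).continuousOn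
  have h0 : (phiPoly p α).eval 0 < 0 := by
    rw [evalPhi, sum_zero_pow p hp α, zero_pow (by omega)]
    linarith
  have h1 : 0 < (phiPoly p α).eval ((p:ℝ)+1) := by
    rw [evalPhi]
    linarith [F_top_pos p hp α hα]
  have hsub := intermediate_value_Icc (by positivity : (0:ℝ) ≤ (p:ℝ)+1) hcont
  obtain ⟨r, hrmem, hr⟩ := hsub ⟨h0.le, h1.le⟩
  refine ⟨r, ?_, ?_⟩
  · rcases hrmem.1.lt_or_eq with h | h
    · exact h
    · exfalso; rw [← h] at hr; linarith
  · simp only [evalPhi] at hr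
    linarith

lemma mulVec_companion (p : ℕ) (α : Fin p → ℝ) (v : Fin p → ℂ) (i : Fin p) :
    ((companion p α).map (Complex.ofReal : ℝ → ℂ)).mulVec v i
      = if h : (i : ℕ) = 0 then ∑ j : Fin p, (α j : ℂ) * v j
        else v ⟨(i : ℕ) - 1, by omega⟩ := by
  by_cases h : (i : ℕ) = 0
  · simp only [dif_pos h, Matrix.mulVec, dotProduct, Matrix.map_apply, companion,
      Matrix.of_apply, if_pos h]
  · simp only [dif_neg h, Matrix.mulVec, dotProduct, Matrix.map_apply, companion,
      Matrix.of_apply, if_neg h]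
    rw [Finset.sum_eq_single (⟨(i : ℕ) - 1, by omega⟩ : Fin p)]
    · have hc : (i : ℕ) = ((⟨(i : ℕ) - 1, by omega⟩ : Fin p) : ℕ) + 1 := by simp; omega
      rw [if_pos hc, Complex.ofReal_one, one_mul]
    · intro j _ hj
      rw [if_neg, Complex.ofReal_zero, zero_mul]
      intro hij
      apply hj
      ext
      simp only []
      omega
    · simp

lemma spec_iff (p : ℕ) (hp : 0 < p) (α : Fin p → ℝ) (z : ℂ) :
    z ∈ spectrum ℂ ((companion p α).map (Complex.ofReal : ℝ → ℂ))
      ↔ z ^ p = ∑ k : Fin p, (α k : ℂ) * z ^ (p - 1 - (k : ℕ)) := by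
  set B := (companion p α).map (Complex.ofReal : ℝ → ℂ) with hB
  rw [spectrum.mem_iff]
  rw [Matrix.isUnit_iff_isUnit_det]
  rw [isUnit_iff_ne_zero, not_not]
  rw [← Matrix.exists_mulVec_eq_zero_iff]
  constructor
  · rintro ⟨v, hv, hmv⟩
    -- eigen-equation: z • v = B.mulVec v
    have heig : ∀ i, z * v i = B.mulVec v i := by
      intro i
      have := congrFun hmv i
      simp only [Matrix.sub_mulVec, Pi.sub_apply, Pi.zero_apply, sub_eq_zero] at this
      rw [← this]
      rw [Matrix.algebraMap_eq_diagonal]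
      simp [Matrix.mulVec_diagonal]
    -- claim A
    have claimA : ∀ j : ℕ, j < p → v ⟨p - 1 - j, by omega⟩ = z ^ j * v ⟨p - 1, Nat.sub_lt hp Nat.one_pos⟩ := by
      intro j hj
      induction j with
      | zero => simp
      | succ n ih =>
        have hn := ih (by omega)
        have hrow := heig ⟨p - 1 - n, by omega⟩
        rw [mulVec_companion] at hrow
        rw [dif_neg (by simp; omega)] at hrow
        have hidx : ((⟨p - 1 - n, by omega⟩ : Fin p) : ℕ) - 1 = p - 1 - (n+1) := by
          simp; omega
        rw [show (⟨((⟨p - 1 - n, by omega⟩ : Fin p) : ℕ) - 1, by omega⟩ : Fin p)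
            = ⟨p - 1 - (n+1), by omega⟩ by ext; simp; omega] at hrow
        rw [← hrow, hn]
        ring
    have hAll : ∀ i : Fin p, v i = z ^ (p - 1 - (i : ℕ)) * v ⟨p - 1, Nat.sub_lt hp Nat.one_pos⟩ := by
      intro i
      have := claimA (p - 1 - (i : ℕ)) (by omega)
      rw [show (⟨p - 1 - (p - 1 - (i:ℕ)), by omega⟩ : Fin p) = i by ext; simp; omega] at this
      exact this
    have hvp : v ⟨p - 1, Nat.sub_lt hp Nat.one_pos⟩ ≠ 0 := by
      intro h0
      apply hv
      funext i
      rw [hAll i, h0, mul_zero]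
      rfl
    have hrow0 := heig ⟨0, hp⟩
    rw [mulVec_companion, dif_pos rfl] at hrow0
    have hsum : ∑ j : Fin p, (α j : ℂ) * v j
        = (∑ j : Fin p, (α j : ℂ) * z ^ (p - 1 - (j:ℕ))) * v ⟨p - 1, Nat.sub_lt hp Nat.one_pos⟩ := by
      rw [Finset.sum_mul]
      apply Finset.sum_congr rfl
      intro j _
      rw [hAll j]; ring
    rw [hsum] at hrow0
    have hv0 : v ⟨0, hp⟩ = z ^ (p - 1) * v ⟨p - 1, Nat.sub_lt hp Nat.one_pos⟩ := by
      have := hAll ⟨0, hp⟩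
      simpa using this
    rw [hv0] at hrow0
    have : z ^ p * v ⟨p - 1, Nat.sub_lt hp Nat.one_pos⟩
        = (∑ j : Fin p, (α j : ℂ) * z ^ (p - 1 - (j:ℕ))) * v ⟨p - 1, Nat.sub_lt hp Nat.one_pos⟩ := by
      rw [← hrow0]
      rw [← mul_assoc, ← pow_succ']
      congr 2
      omega
    exact mul_right_cancel₀ hvp this
  · intro hz
    refine ⟨fun i => z ^ (p - 1 - (i : ℕ)), ?_, ?_⟩
    · intro h0
      have := congrFun h0 ⟨p - 1, Nat.sub_lt hp Nat.one_pos⟩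
      simp at this
    · funext i
      simp only [Matrix.sub_mulVec, Pi.sub_apply, Pi.zero_apply, sub_eq_zero]
      rw [Matrix.algebraMap_eq_diagonal]
      simp only [Matrix.mulVec_diagonal, Pi.algebraMap_apply, Algebra.algebraMap_self,
        RingHom.id_apply]
      rw [mulVec_companion]
      by_cases h : (i : ℕ) = 0
      · rw [dif_pos h, h]
        rw [← hz, ← pow_succ']
        congr 1
        omega
      · rw [dif_neg h]
        simp only []
        rw [← pow_succ']
        congr 1
        omega

lemma deriv_eval (p : ℕ) (α : Fin p → ℝ) (x : ℝ) :
    ((phiPoly p α).derivative).eval x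
      = p * x ^ (p - 1) - ∑ k : Fin p, ((p - 1 - (k:ℕ) : ℕ) : ℝ) * α k * x ^ (p - 1 - (k:ℕ) - 1) := by
  simp only [phiPoly, derivative_sub, derivative_X_pow, derivative_sum, derivative_C_mul,
    derivative_X_pow]
  rw [eval_sub, eval_mul, eval_pow, eval_X, eval_C, eval_finset_sum]
  congr 1
  apply Finset.sum_congr rfl
  intro k _
  rw [eval_mul, eval_C, eval_mul, eval_pow, eval_X, eval_C]
  ring

lemma deriv_pos (p : ℕ) (hp : 0 < p) (α : Fin p → ℝ)
    (hα : ∀ i, 0 ≤ α i) (hαp : 0 < α ⟨p - 1, Nat.sub_lt hp Nat.one_pos⟩)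
    {r : ℝ} (hr : 0 < r)
    (hroot : ∑ k : Fin p, α k * r ^ (p - 1 - (k : ℕ)) = r ^ p) :
    0 < ((phiPoly p α).derivative).eval r := by
  have key : r * ((phiPoly p α).derivative).eval r
      = ∑ k : Fin p, ((k:ℕ) + 1 : ℝ) * α k * r ^ (p - 1 - (k:ℕ)) := by
    rw [deriv_eval]
    rw [mul_sub]
    have h1 : r * ((p:ℝ) * r ^ (p - 1)) = ∑ k : Fin p, (p:ℝ) * α k * r ^ (p - 1 - (k:ℕ)) := by
      have hpow : r ^ p = r ^ (p-1) * r := by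
        rw [← pow_succ]; congr 1; omega
      have : r * ((p:ℝ) * r ^ (p - 1)) = (p:ℝ) * r ^ p := by
        rw [hpow]; ring
      rw [this, ← hroot, Finset.mul_sum]
      apply Finset.sum_congr rfl
      intro k _
      ring
    have h2 : r * ∑ k : Fin p, ((p - 1 - (k:ℕ) : ℕ) : ℝ) * α k * r ^ (p - 1 - (k:ℕ) - 1)
        = ∑ k : Fin p, ((p - 1 - (k:ℕ) : ℕ) : ℝ) * α k * r ^ (p - 1 - (k:ℕ)) := by
      rw [Finset.mul_sum]
      apply Finset.sum_congr rfl
      intro k _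
      by_cases hk : (k:ℕ) = p - 1
      · rw [show p - 1 - (k:ℕ) = 0 by omega]
        norm_num
      · have hlt : (k:ℕ) < p - 1 := by have := k.isLt; omega
        have hpow : r ^ (p - 1 - (k:ℕ)) = r ^ (p - 1 - (k:ℕ) - 1) * r := by
          rw [← pow_succ]; congr 1; omega
        rw [hpow]; ring
    rw [h1, h2, ← Finset.sum_sub_distrib]
    apply Finset.sum_congr rfl
    intro k _
    have hc : ((p - 1 - (k:ℕ) : ℕ) : ℝ) = (p:ℝ) - 1 - (k:ℕ) := by
      have := k.isLt
      push_cast [Nat.cast_sub (by omega : (k:ℕ) ≤ p - 1), Nat.cast_sub (by omega : 1 ≤ p)]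
      ring
    rw [hc]
    have hpc : (1:ℝ) ≤ (p:ℝ) := by exact_mod_cast hp
    ring
  have hsum : 0 < ∑ k : Fin p, ((k:ℕ) + 1 : ℝ) * α k * r ^ (p - 1 - (k:ℕ)) := by
    have hterm : (0:ℝ) < (((⟨p-1, Nat.sub_lt hp Nat.one_pos⟩ : Fin p) : ℕ) + 1 : ℝ) * α ⟨p-1, Nat.sub_lt hp Nat.one_pos⟩
        * r ^ (p - 1 - ((⟨p-1, Nat.sub_lt hp Nat.one_pos⟩ : Fin p):ℕ)) := by
      have h1 : (0:ℝ) < (((⟨p-1, Nat.sub_lt hp Nat.one_pos⟩ : Fin p) : ℕ) + 1 : ℝ) := by positivity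
      exact mul_pos (mul_pos h1 hαp) (pow_pos hr _)
    calc (0:ℝ) < _ := hterm
      _ ≤ _ := Finset.single_le_sum (f := fun k : Fin p => ((k:ℕ) + 1 : ℝ) * α k * r ^ (p - 1 - (k:ℕ)))
          (fun k _ => mul_nonneg (mul_nonneg (by positivity) (hα k)) (pow_nonneg hr.le _)) (Finset.mem_univ _)
  nlinarith

lemma re_eq_abs_imp {c : ℂ} (h : c.re = ‖c‖) : c = ((‖c‖ : ℝ) : ℂ) := by
  have h1 : ‖c‖ ^ 2 = c.re * c.re + c.im * c.im := by
    rw [Complex.sq_norm, Complex.normSq_apply]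
  have him : c.im = 0 := by
    have h3 : ‖c‖ ^ 2 = c.re * c.re := by rw [h]; ring
    have h2 : c.im * c.im = 0 := by linarith
    exact mul_self_eq_zero.mp h2
  apply Complex.ext
  · simp [h]
  · simp [him]

-- equality case: if |z| = r then z = r
lemma eq_of_abs_eq (p : ℕ) (hp : 0 < p) (α : Fin p → ℝ)
    (hα : ∀ i, 0 ≤ α i)
    (hgcd : (Finset.univ.filter fun i : Fin p => 0 < α i).gcd (fun i => (i : ℕ) + 1) = 1)
    {r : ℝ} (hr : 0 < r)
    (hroot : ∑ k : Fin p, α k * r ^ (p - 1 - (k : ℕ)) = r ^ p)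
    {z : ℂ} (hz : z ^ p = ∑ k : Fin p, (α k : ℂ) * z ^ (p - 1 - (k : ℕ)))
    (habs : ‖z‖ = r) : z = ((r : ℝ) : ℂ) := by
  have hz0 : z ≠ 0 := by
    intro h
    rw [h] at habs
    simp at habs
    linarith
  set c : Fin p → ℂ := fun k => z ^ (p - 1 - (k:ℕ)) * (starRingEnd ℂ z) ^ p with hc
  have habsc : ∀ k : Fin p, ‖c k‖ = r ^ (p - 1 - (k:ℕ)) * r ^ p := by
    intro k
    simp only [hc]
    rw [norm_mul, norm_pow, norm_pow,
      Complex.norm_conj, habs]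
  have step1 : ∑ k : Fin p, (α k : ℂ) * c k = (((r ^ p * r ^ p : ℝ)) : ℂ) := by
    have : ∑ k : Fin p, (α k : ℂ) * c k
        = (∑ k : Fin p, (α k : ℂ) * z ^ (p - 1 - (k:ℕ))) * (starRingEnd ℂ z) ^ p := by
      rw [Finset.sum_mul]
      apply Finset.sum_congr rfl
      intro k _
      simp [hc]; ring
    rw [this, ← hz, ← mul_pow, Complex.mul_conj, Complex.normSq_eq_norm_sq, habs]
    push_cast
    ring
  have step2 : ∑ k : Fin p, α k * (c k).re = r ^ p * r ^ p := by
    have := congrArg Complex.re step1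
    rw [Complex.re_sum] at this
    simp only [Complex.ofReal_re] at this
    rw [← this]
    apply Finset.sum_congr rfl
    intro k _
    rw [Complex.re_ofReal_mul]
  have step3 : ∑ k : Fin p, α k * (r ^ (p - 1 - (k:ℕ)) * r ^ p) = r ^ p * r ^ p := by
    have : ∑ k : Fin p, α k * (r ^ (p - 1 - (k:ℕ)) * r ^ p)
        = (∑ k : Fin p, α k * r ^ (p - 1 - (k:ℕ))) * r ^ p := by
      rw [Finset.sum_mul]
      apply Finset.sum_congr rfl
      intro k _; ring
    rw [this, hroot]
  have hrele : ∀ k : Fin p, (c k).re ≤ r ^ (p - 1 - (k:ℕ)) * r ^ p := by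
    intro k
    calc (c k).re ≤ ‖c k‖ := Complex.re_le_norm _
      _ = _ := habsc k
  have step4 : ∀ k : Fin p, 0 < α k → (c k).re = r ^ (p - 1 - (k:ℕ)) * r ^ p := by
    intro k hk
    have hzero : ∑ j : Fin p, α j * (r ^ (p - 1 - (j:ℕ)) * r ^ p - (c j).re) = 0 := by
      have : ∑ j : Fin p, α j * (r ^ (p - 1 - (j:ℕ)) * r ^ p - (c j).re)
          = ∑ j : Fin p, α j * (r ^ (p - 1 - (j:ℕ)) * r ^ p) - ∑ j : Fin p, α j * (c j).re := by
        rw [← Finset.sum_sub_distrib]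
        apply Finset.sum_congr rfl
        intro j _; ring
      rw [this, step2, step3, sub_self]
    have heach := (Finset.sum_eq_zero_iff_of_nonneg (fun j _ =>
      mul_nonneg (hα j) (by linarith [hrele j]))).mp hzero k (Finset.mem_univ k)
    have : r ^ (p - 1 - (k:ℕ)) * r ^ p - (c k).re = 0 := by
      rcases mul_eq_zero.mp heach with h | h
      · exact absurd h (ne_of_gt hk)
      · exact h
    linarith
  -- now for each k with α k > 0, z ^ (k+1) = r ^ (k+1)
  have hzk : ∀ k : Fin p, 0 < α k → z ^ ((k:ℕ) + 1) = ((r:ℂ)) ^ ((k:ℕ) + 1) := by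
    intro k hk
    have hceq : c k = ((r ^ (p - 1 - (k:ℕ)) * r ^ p : ℝ) : ℂ) := by
      have h1 := re_eq_abs_imp (c := c k) (by rw [step4 k hk, habsc k])
      rw [habsc k] at h1
      exact h1
    -- multiply by z ^ p
    have h2 : z ^ (p - 1 - (k:ℕ)) * ((starRingEnd ℂ z) ^ p * z ^ p)
        = ((r ^ (p - 1 - (k:ℕ)) * r ^ p : ℝ) : ℂ) * z ^ p := by
      rw [← mul_assoc]
      exact congrArg (· * z ^ p) hceq
    have h3 : (starRingEnd ℂ z) ^ p * z ^ p = ((r:ℂ)) ^ p * ((r:ℂ)) ^ p := by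
      rw [← mul_pow, mul_comm, Complex.mul_conj, Complex.normSq_eq_norm_sq, habs]
      push_cast
      ring
    rw [h3] at h2
    push_cast at h2
    have hzsplit : z ^ p = z ^ (p - 1 - (k:ℕ)) * z ^ ((k:ℕ) + 1) := by
      rw [← pow_add]
      congr 1
      have := k.isLt
      omega
    have hrsplit : ((r:ℂ)) ^ p = ((r:ℂ)) ^ (p - 1 - (k:ℕ)) * ((r:ℂ)) ^ ((k:ℕ) + 1) := by
      rw [← pow_add]
      congr 1
      have := k.isLt
      omega
    have hzpk : z ^ (p - 1 - (k:ℕ)) ≠ 0 := pow_ne_zero _ hz0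
    have hr0 : ((r:ℂ)) ≠ 0 := by
      simp only [ne_eq, Complex.ofReal_eq_zero]
      exact ne_of_gt hr
    have key : (z ^ (p - 1 - (k:ℕ)) * ((r:ℂ)) ^ (p - 1 - (k:ℕ)) * ((r:ℂ)) ^ p) * z ^ ((k:ℕ)+1)
        = (z ^ (p - 1 - (k:ℕ)) * ((r:ℂ)) ^ (p - 1 - (k:ℕ)) * ((r:ℂ)) ^ p) * ((r:ℂ)) ^ ((k:ℕ)+1) := by
      linear_combination (-1 : ℂ) * h2 - (((r:ℂ)) ^ (p - 1 - (k:ℕ)) * ((r:ℂ)) ^ p) * hzsplit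
        + (z ^ (p - 1 - (k:ℕ)) * ((r:ℂ)) ^ p) * hrsplit
    exact mul_left_cancel₀
      (mul_ne_zero (mul_ne_zero hzpk (pow_ne_zero _ hr0)) (pow_ne_zero _ hr0)) key
  -- gcd argument
  set w : ℂ := z / ((r:ℂ)) with hw
  have hr0 : ((r:ℂ)) ≠ 0 := by
    simp only [ne_eq, Complex.ofReal_eq_zero]; exact ne_of_gt hr
  have hwpow : ∀ k ∈ (Finset.univ.filter fun i : Fin p => 0 < α i),
      w ^ ((k:ℕ) + 1) = 1 := by
    intro k hk
    have hk' : 0 < α k := (Finset.mem_filter.mp hk).2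
    rw [hw, div_pow, hzk k hk', div_self (pow_ne_zero _ hr0)]
  have hdvd : orderOf w ∣ 1 := by
    rw [← hgcd]
    apply Finset.dvd_gcd
    intro k hk
    exact orderOf_dvd_of_pow_eq_one (hwpow k hk)
  have hw1 : w = 1 := orderOf_eq_one_iff.mp (Nat.dvd_one.mp hdvd)
  rw [hw, div_eq_one_iff_eq hr0] at hw1
  exact hw1

lemma mult_one (p : ℕ) (hp : 0 < p) (α : Fin p → ℝ)
    (hα : ∀ i, α i ∈ Set.Icc (0:ℝ) 1) (hαp : 0 < α ⟨p - 1, Nat.sub_lt hp Nat.one_pos⟩)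
    {r : ℝ} (hr : 0 < r)
    (hroot : ∑ k : Fin p, α k * r ^ (p - 1 - (k : ℕ)) = r ^ p) :
    (phiPoly p α).rootMultiplicity r = 1 := by
  have hφne : phiPoly p α ≠ 0 := by
    intro h
    have h1 : 0 < (phiPoly p α).eval ((p:ℝ)+1) := by
      rw [evalPhi]
      linarith [F_top_pos p hp α hα]
    rw [h] at h1
    simp at h1
  have hisroot : (phiPoly p α).IsRoot r := by
    rw [IsRoot, evalPhi, hroot, sub_self]
  have hD : 0 < ((phiPoly p α).derivative).eval r :=
    deriv_pos p hp α (fun i => (hα i).1) hαp hr hroot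
  have hge : 1 ≤ (phiPoly p α).rootMultiplicity r :=
    (rootMultiplicity_pos hφne).2 hisroot
  rcases Nat.lt_or_ge ((phiPoly p α).rootMultiplicity r) 2 with h | h
  · omega
  · exfalso
    have hdvd : (X - C r) ^ 2 ∣ phiPoly p α :=
      dvd_trans (pow_dvd_pow _ h) ((phiPoly p α).pow_rootMultiplicity_dvd r)
    obtain ⟨g, hg⟩ := hdvd
    have : ((phiPoly p α).derivative).eval r = 0 := by
      rw [hg]
      simp [derivative_mul, derivative_pow]
    linarith

lemma abs_root_le (p : ℕ) (hp : 0 < p) (α : Fin p → ℝ)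
    (hα : ∀ i, α i ∈ Set.Icc (0:ℝ) 1) (hαp : 0 < α ⟨p - 1, Nat.sub_lt hp Nat.one_pos⟩)
    {r : ℝ} (hr : 0 < r)
    (hroot : ∑ k : Fin p, α k * r ^ (p - 1 - (k : ℕ)) = r ^ p)
    {z : ℂ} (hz : z ^ p = ∑ k : Fin p, (α k : ℂ) * z ^ (p - 1 - (k : ℕ))) :
    ‖z‖ ≤ r := by
  by_contra hlt
  push_neg at hlt
  have h1 := sum_lt p hp α (fun i => (hα i).1) hαp hr hlt hroot
  have h2 : ‖z‖ ^ p ≤ ∑ k : Fin p, α k * ‖z‖ ^ (p - 1 - (k:ℕ)) := by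
    calc ‖z‖ ^ p = ‖z ^ p‖ := (norm_pow _ _).symm
      _ = ‖∑ k : Fin p, (α k : ℂ) * z ^ (p - 1 - (k:ℕ))‖ := by rw [hz]
      _ ≤ ∑ k : Fin p, ‖(α k : ℂ) * z ^ (p - 1 - (k:ℕ))‖ :=
          norm_sum_le _ _
      _ = ∑ k : Fin p, α k * ‖z‖ ^ (p - 1 - (k:ℕ)) := by
          apply Finset.sum_congr rfl
          intro k _
          rw [norm_mul, norm_pow, Complex.norm_real, Real.norm_eq_abs,
            abs_of_nonneg (hα k).1]
  linarith

end Aux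

/-- in the primitive case, `ρ(A)` is a root of `φ` of multiplicity one, and
every complex root `λ ≠ ρ(A)` of `φ` satisfies `|λ| < ρ(A)`. -/
theorem specRad_simple_and_dominant_root
    (p : ℕ) (hp : 0 < p) (α : Fin p → ℝ)
    (hα : ∀ i, α i ∈ Set.Icc (0 : ℝ) 1)
    (hαp : 0 < α ⟨p - 1, by omega⟩)
    (hgcd : (Finset.univ.filter fun i : Fin p => 0 < α i).gcd
        (fun i => (i : ℕ) + 1) = 1) :
    (phiPoly p α).rootMultiplicity (specRad (companion p α)) = 1 ∧
    ∀ z : ℂ, ((phiPoly p α).map (algebraMap ℝ ℂ)).IsRoot z →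
      z ≠ (specRad (companion p α) : ℂ) →
      ‖z‖ < specRad (companion p α) := by
  obtain ⟨r, hr, hroot⟩ := exists_root p hp α hα hαp
  have hspec : specRad (companion p α) = r := by
    rw [specRad]
    apply IsGreatest.csSup_eq
    constructor
    · refine ⟨((r : ℝ) : ℂ), ?_, ?_⟩
      · rw [spec_iff p hp α]
        have := hroot.symm
        exact_mod_cast congrArg (fun t : ℝ => (t : ℂ)) this
      · rw [Complex.norm_real, Real.norm_eq_abs, abs_of_pos hr]
    · rintro t ⟨z, hzspec, rfl⟩
      exact abs_root_le p hp α hα hαp hr hroot ((spec_iff p hp α z).1 hzspec)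
  rw [hspec]
  constructor
  · exact mult_one p hp α hα hαp hr hroot
  · intro z hzroot hzne
    have hz : z ^ p = ∑ k : Fin p, (α k : ℂ) * z ^ (p - 1 - (k : ℕ)) := by
      have := hzroot
      rw [IsRoot, evalPhiC, sub_eq_zero] at this
      exact this
    rcases lt_or_eq_of_le (abs_root_le p hp α hα hαp hr hroot hz) with h | h
    · exact h
    · exfalso
      exact hzne (eq_of_abs_eq p hp α (fun i => (hα i).1) hgcd hr hroot hz h)

end
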